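/- Let 𝒢 be a periodic evolving graph with period Γ on a finite vertex set V, and let M be a demand matrix. Define the simple static weighted directed graph G′ = (V, E′) with E′ = ⋃_{0 ≤ t < Γ} ℰ_t and edge capacities ĉ(e) = ((1−Δu)/Γ)·Σ_{0 ≤ t < Γ} c_t(e) for e ∈ E′. Then the maximum throughput over all legal temporal flows in 𝒢 for M equals the maximum throughput over all legal flows in G′ for M, where a legal flow in G′ assigns nonnegative values to simple directed paths of G′ so that the total flow through each edge e is at most ĉ(e), and it achieves throughput θ if the total flow on s–d paths is at least θ·m_{s,d} for all s,d. -/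

import Mathlib

open scoped ENNReal NNReal BigOperators

namespace RDCN

/-- A directed edge. -/
abbrev Edge (V : Type*) := V × V
/-- A temporal path (or a labelled-edge path): a list of edge/time(label) pairs. -/
abbrev TPath (V : Type*) := List (Edge V × ℕ)
/-- An extended path in the emulated graph: a labelled-edge path together with its
unique identifier (a temporal path). -/
abbrev ExtPath (V : Type*) := TPath V × TPath V

variable {V : Type*}

/-- The vertex sequence of a list of directed edges. -/
def pathVerts (es : List (Edge V)) : List V :=
  match es with
  | [] => []
  | e :: _ => e.1 :: es.map Prod.snd

/-- A nonempty list of directed edges forming a directed path visiting pairwise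
distinct vertices. -/
def IsSimpleEdgePath (es : List (Edge V)) : Prop :=
  es ≠ [] ∧ es.Chain' (fun e e' => e.2 = e'.1) ∧ (pathVerts es).Nodup

/-- `es` is a path from `s` to `d`. -/
def EndpointsOf (es : List (Edge V)) (s d : V) : Prop :=
  es.head?.map Prod.fst = some s ∧ es.getLast?.map Prod.snd = some d

/-- A periodic evolving graph with period `Γ`, timeslot duration `Δ` and
reconfiguration fraction `Δu`. -/
structure PEG (V : Type*) where
  Γ : ℕ
  Γ_pos : 1 ≤ Γ
  E : ℕ → Set (V × V)
  E_periodic : ∀ t, E (t + Γ) = E t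
  c : ℕ → V × V → ℝ≥0
  c_periodic : ∀ t e, c (t + Γ) e = c t e
  c_zero : ∀ t e, e ∉ E t → c t e = 0
  Δ : ℝ≥0
  Δ_pos : 0 < Δ
  Δu : ℝ≥0
  Δu_lt_one : Δu < 1

/-- A legal temporal path in the periodic evolving graph `G`. -/
def IsTemporalPath (G : PEG V) (δ : TPath V) : Prop :=
  δ ≠ [] ∧ (∀ x ∈ δ, x.1 ∈ G.E x.2) ∧
    δ.Chain' (fun x y => x.2 < y.2 ∧ y.2 ≤ x.2 + G.Γ) ∧
    IsSimpleEdgePath (δ.map Prod.fst)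

/-- The foundation set `𝒫⁰`: legal temporal paths starting in the first period. -/
def Foundation (G : PEG V) : Set (TPath V) :=
  {δ | IsTemporalPath G δ ∧ ∀ t₀ : ℕ, δ.head?.map Prod.snd = some t₀ → t₀ < G.Γ}

/-- The temporal path `δ` goes from `s` to `d`. -/
def TEndpoints (δ : TPath V) (s d : V) : Prop :=
  EndpointsOf (δ.map Prod.fst) s d

/-- `𝒫⁰_{s,d}`. -/
def FoundationSD (G : PEG V) (s d : V) : Set (TPath V) :=
  {δ | δ ∈ Foundation G ∧ TEndpoints δ s d}

/-- Shift all times of a temporal path by `k·Γ`. -/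
def shiftPath (Γ k : ℕ) (δ : TPath V) : TPath V :=
  δ.map fun x => (x.1, x.2 + k * Γ)

/-- `𝒫*`: all periodic shifts of foundation paths. -/
def PStar (G : PEG V) : Set (TPath V) :=
  {δ' | ∃ δ ∈ Foundation G, ∃ k : ℕ, δ' = shiftPath G.Γ k δ}

/-- `𝒫*_{s,d}`. -/
def PStarSD (G : PEG V) (s d : V) : Set (TPath V) :=
  {δ | δ ∈ PStar G ∧ TEndpoints δ s d}

/-- A legal temporal flow: nonnegative (enforced by `ℝ≥0`), invariant under
shifting a path's times by `Γ`, and obeying the capacity constraints at all times. -/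
structure IsLegalTemporalFlow (G : PEG V) (F : TPath V → ℝ≥0) : Prop where
  periodic : ∀ δ ∈ PStar G, F (shiftPath G.Γ 1 δ) = F δ
  capacity : ∀ (e : Edge V) (t : ℕ),
    ∑' δ : {δ : TPath V // δ ∈ PStar G ∧ (e, t) ∈ δ}, ((F (δ : TPath V) : ℝ≥0) : ℝ≥0∞)
      ≤ (G.c t e : ℝ≥0∞)

/-- The factor `(1-Δu)/Γ`. -/
noncomputable def capFactor (G : PEG V) : ℝ≥0∞ :=
  ((1 - G.Δu : ℝ≥0) : ℝ≥0∞) / (G.Γ : ℝ≥0∞)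

/-- The temporal flow `F` achieves throughput `θ` for the demand matrix `m`:
`((1-Δu)/Γ)·Σ_{δ ∈ 𝒫⁰_{s,d}} F(δ) ≥ θ·m_{s,d}` for all `s, d`. -/
def AchievesThroughputT (G : PEG V) (F : TPath V → ℝ≥0) (m : V → V → ℝ≥0)
    (θ : ℝ≥0∞) : Prop :=
  ∀ s d : V, θ * (m s d : ℝ≥0∞) ≤
    capFactor G * ∑' δ : FoundationSD G s d, ((F (δ : TPath V) : ℝ≥0) : ℝ≥0∞)

/-- Capacity `ĉ(e,ℓ) = ((1-Δu)/Γ)·c_ℓ(e)` of a labelled edge of the emulated graph. -/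
noncomputable def chat (G : PEG V) (e : Edge V) (ℓ : ℕ) : ℝ≥0∞ :=
  capFactor G * (G.c ℓ e : ℝ≥0∞)

/-- The map `static` sending a temporal path `δ = ⟨(eᵢ,tᵢ)⟩` to the extended path
`(⟨(eᵢ, tᵢ mod Γ)⟩, δ)` with `δ` as the unique identifier. -/
def staticOf (Γ : ℕ) (δ : TPath V) : ExtPath V :=
  (δ.map fun x => (x.1, x.2 % Γ), δ)

/-- `P* = static(𝒫⁰)`, the extended path set of the emulated graph. -/
def PStarStatic (G : PEG V) : Set (ExtPath V) :=
  staticOf G.Γ '' Foundation G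

/-- The extended path `p` goes from `s` to `d`. -/
def SEndpoints (p : ExtPath V) (s d : V) : Prop :=
  EndpointsOf (p.1.map Prod.fst) s d

/-- A legal flow on a set `P` of extended paths of the emulated graph: equal on paths
with identical labelled-edge sequences, and obeying the capacity constraints. -/
structure IsLegalStaticFlow (G : PEG V) (P : Set (ExtPath V)) (F : ExtPath V → ℝ≥0) :
    Prop where
  congr : ∀ p ∈ P, ∀ q ∈ P, p.1 = q.1 → F p = F q
  capacity : ∀ (e : Edge V) (ℓ : ℕ), ℓ < G.Γ →
    ∑' p : {p : ExtPath V // p ∈ P ∧ (e, ℓ) ∈ p.1}, ((F (p : ExtPath V) : ℝ≥0) : ℝ≥0∞)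
      ≤ chat G e ℓ

/-- The flow `F` on the extended path set `P` achieves throughput `θ` for `m`:
`Σ_{p ∈ P_{s,d}} F(p) ≥ θ·m_{s,d}` for all `s, d`. -/
def AchievesThroughputS (P : Set (ExtPath V)) (F : ExtPath V → ℝ≥0) (m : V → V → ℝ≥0)
    (θ : ℝ≥0∞) : Prop :=
  ∀ s d : V, θ * (m s d : ℝ≥0∞) ≤
    ∑' p : {p : ExtPath V // p ∈ P ∧ SEndpoints p s d}, ((F (p : ExtPath V) : ℝ≥0) : ℝ≥0∞)

/-- First time of a temporal path. -/
def tStart (δ : TPath V) : ℕ := (δ.head?.map Prod.snd).getD 0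
/-- Last time of a temporal path. -/
def tEnd (δ : TPath V) : ℕ := (δ.getLast?.map Prod.snd).getD 0

/-- The delay `L(δ) = (t_n − t₁ + 1)·Δ + (Γ−1)·Δ` of a temporal path. -/
noncomputable def delay (G : PEG V) (δ : TPath V) : ℝ≥0∞ :=
  ((tEnd δ - tStart δ + 1 : ℕ) : ℝ≥0∞) * (G.Δ : ℝ≥0∞) +
    ((G.Γ - 1 : ℕ) : ℝ≥0∞) * (G.Δ : ℝ≥0∞)

/-- `Σ_{δ ∈ 𝒫⁰_{s,d}} F(δ)`. -/
noncomputable def sdSum (G : PEG V) (F : TPath V → ℝ≥0) (s d : V) : ℝ≥0∞ :=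
  ∑' δ : FoundationSD G s d, ((F (δ : TPath V) : ℝ≥0) : ℝ≥0∞)

/-- `r_δ = F(δ)/Σ_{δ' ∈ 𝒫⁰_{s,d}} F(δ')` (with value `0` when the denominator is `0`,
which holds automatically since then `F(δ) = 0` for `δ ∈ 𝒫⁰_{s,d}`). -/
noncomputable def rfrac (G : PEG V) (F : TPath V → ℝ≥0) (s d : V) (δ : TPath V) : ℝ≥0∞ :=
  ((F δ : ℝ≥0) : ℝ≥0∞) / sdSum G F s d

/-- Total demand `M_tot = Σ_{s,d} m_{s,d}`. -/
noncomputable def Mtot [Fintype V] (m : V → V → ℝ≥0) : ℝ≥0∞ :=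
  ∑ s : V, ∑ d : V, (m s d : ℝ≥0∞)

/-- Average route delay `ARD(M,F) = Σ_{s,d} (m_{s,d}/M_tot)·Σ_{δ ∈ 𝒫⁰_{s,d}} r_δ·L(δ)`. -/
noncomputable def ARD [Fintype V] (G : PEG V) (F : TPath V → ℝ≥0) (m : V → V → ℝ≥0) :
    ℝ≥0∞ :=
  ∑ s : V, ∑ d : V, ((m s d : ℝ≥0∞) / Mtot m) *
    ∑' δ : FoundationSD G s d, rfrac G F s d (δ : TPath V) * delay G (δ : TPath V)

/-- Average route length
`ARL(M,F) = Σ_{s,d} Σ_{δ ∈ 𝒫⁰_{s,d}} (m_{s,d}/M_tot)·r_δ·len(δ)`. -/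
noncomputable def ARLt [Fintype V] (G : PEG V) (F : TPath V → ℝ≥0) (m : V → V → ℝ≥0) :
    ℝ≥0∞ :=
  ∑ s : V, ∑ d : V, ∑' δ : FoundationSD G s d,
    ((m s d : ℝ≥0∞) / Mtot m) * rfrac G F s d (δ : TPath V) * ((δ : TPath V).length : ℝ≥0∞)


/-- Edge set `E' = ⋃_{0 ≤ t < Γ} ℰ_t` of the simple static union graph `G'`. -/
def UnionEdges (G : PEG V) : Set (Edge V) := {e | ∃ t < G.Γ, e ∈ G.E t}

/-- Capacity `ĉ(e) = ((1−Δu)/Γ)·Σ_{0 ≤ t < Γ} c_t(e)` of an edge of `G'`. -/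
noncomputable def unionCap (G : PEG V) (e : Edge V) : ℝ≥0∞ :=
  capFactor G * ∑ t ∈ Finset.range G.Γ, (G.c t e : ℝ≥0∞)

/-- Simple directed paths of the union graph `G'`. -/
def UnionPaths (G : PEG V) : Set (List (Edge V)) :=
  {p | (∀ e ∈ p, e ∈ UnionEdges G) ∧ IsSimpleEdgePath p}

/-- A legal flow in `G'`: nonnegative values on simple directed paths such that the
total flow through each edge `e` is at most `ĉ(e)`. -/
def IsLegalUnionFlow (G : PEG V) (F : List (Edge V) → ℝ≥0) : Prop :=
  ∀ e ∈ UnionEdges G,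
    ∑' p : {p : List (Edge V) // p ∈ UnionPaths G ∧ e ∈ p},
      ((F (p : List (Edge V)) : ℝ≥0) : ℝ≥0∞) ≤ unionCap G e

/-- The flow `F` in `G'` achieves throughput `θ` for `m`. -/
def AchievesThroughputU (G : PEG V) (F : List (Edge V) → ℝ≥0) (m : V → V → ℝ≥0)
    (θ : ℝ≥0∞) : Prop :=
  ∀ s d : V, θ * (m s d : ℝ≥0∞) ≤
    ∑' p : {p : List (Edge V) // p ∈ UnionPaths G ∧ EndpointsOf p s d},
      ((F (p : List (Edge V)) : ℝ≥0) : ℝ≥0∞)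


/-! ### Auxiliary material for the proof of `statement4` -/

section Statement4Aux

variable {V : Type*}

/-! #### Numeric lemmas -/

private lemma eq_of_mod_eq_of_close {Γ a b : ℕ} (hΓ : 1 ≤ Γ) (h : a % Γ = b % Γ)
    (h1 : a < b + Γ) (h2 : b < a + Γ) : a = b := by
  rcases le_total a b with hab | hab
  · have hd : Γ ∣ b - a := (Nat.modEq_iff_dvd' hab).1 h
    have hlt : b - a < Γ := by omega
    have := Nat.eq_zero_of_dvd_of_lt hd hlt
    omega
  · have hd : Γ ∣ a - b := (Nat.modEq_iff_dvd' hab).1 h.symm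
    have hlt : a - b < Γ := by omega
    have := Nat.eq_zero_of_dvd_of_lt hd hlt
    omega

/-! #### Periodicity lemmas -/

lemma PEG.E_add_mul (G : PEG V) (k t : ℕ) : G.E (t + k * G.Γ) = G.E t := by
  induction k with
  | zero => simp
  | succ k ih => rw [Nat.succ_mul, ← Nat.add_assoc, G.E_periodic, ih]

lemma PEG.c_add_mul (G : PEG V) (k t : ℕ) (e : Edge V) :
    G.c (t + k * G.Γ) e = G.c t e := by
  induction k with
  | zero => simp
  | succ k ih => rw [Nat.succ_mul, ← Nat.add_assoc, G.c_periodic, ih]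

lemma PEG.Γ_ne_zero (G : PEG V) : G.Γ ≠ 0 := by have := G.Γ_pos; omega

lemma PEG.E_mod (G : PEG V) (t : ℕ) : G.E (t % G.Γ) = G.E t := by
  conv_rhs => rw [← Nat.mod_add_div' t G.Γ]
  rw [G.E_add_mul]

lemma PEG.c_mod (G : PEG V) (t : ℕ) (e : Edge V) : G.c (t % G.Γ) e = G.c t e := by
  conv_rhs => rw [← Nat.mod_add_div' t G.Γ]
  rw [G.c_add_mul]

/-! #### shiftPath lemmas -/

lemma shiftPath_zero (Γ : ℕ) (δ : TPath V) : shiftPath Γ 0 δ = δ := by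
  simp [shiftPath]

lemma shiftPath_shift (Γ k j : ℕ) (δ : TPath V) :
    shiftPath Γ k (shiftPath Γ j δ) = shiftPath Γ (k + j) δ := by
  unfold shiftPath
  rw [List.map_map]
  apply List.map_congr_left
  intro x _
  simp only [Function.comp]
  refine congrArg _ ?_
  ring

lemma shiftPath_map_fst (Γ k : ℕ) (δ : TPath V) :
    (shiftPath Γ k δ).map Prod.fst = δ.map Prod.fst := by
  unfold shiftPath
  rw [List.map_map]
  rfl

lemma shiftPath_injective (Γ k : ℕ) : Function.Injective (shiftPath Γ k : TPath V → TPath V) := by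
  apply List.map_injective_iff.2
  rintro ⟨a, t⟩ ⟨b, u⟩ h
  simp only [Prod.mk.injEq] at h
  exact Prod.ext h.1 (by omega)

lemma mem_shiftPath {Γ k : ℕ} {δ : TPath V} {e : Edge V} {t : ℕ} (h : (e, t) ∈ δ) :
    (e, t + k * Γ) ∈ shiftPath Γ k δ :=
  List.mem_map_of_mem h

lemma Foundation.mem_pstar {G : PEG V} {δ : TPath V} (h : δ ∈ Foundation G) :
    δ ∈ PStar G :=
  ⟨δ, h, 0, (shiftPath_zero _ _).symm⟩

lemma PStar.shift {G : PEG V} {δ : TPath V} (h : δ ∈ PStar G) (k : ℕ) :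
    shiftPath G.Γ k δ ∈ PStar G := by
  obtain ⟨δ₀, h₀, j, rfl⟩ := h
  exact ⟨δ₀, h₀, k + j, (shiftPath_shift _ _ _ _)⟩

lemma IsLegalTemporalFlow.shift_eq {G : PEG V} {F : TPath V → ℝ≥0}
    (hF : IsLegalTemporalFlow G F) {δ : TPath V} (h : δ ∈ PStar G) (k : ℕ) :
    F (shiftPath G.Γ k δ) = F δ := by
  induction k with
  | zero => rw [shiftPath_zero]
  | succ k ih =>
    have h1 : shiftPath G.Γ (k + 1) δ = shiftPath G.Γ 1 (shiftPath G.Γ k δ) := by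
      rw [shiftPath_shift, Nat.add_comm]
    rw [h1, hF.periodic _ (PStar.shift h k), ih]

/-! #### Temporal path structure lemmas -/

lemma temporal_shift {G : PEG V} {δ : TPath V} (k : ℕ) (h : IsTemporalPath G δ) :
    IsTemporalPath G (shiftPath G.Γ k δ) := by
  obtain ⟨hne, hmem, hchain, hsimp⟩ := h
  refine ⟨by simpa [shiftPath] using hne, ?_, ?_, ?_⟩
  · intro x hx
    simp only [shiftPath, List.mem_map] at hx
    obtain ⟨y, hy, rfl⟩ := hx
    simpa [G.E_add_mul] using hmem y hy
  · unfold shiftPath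
    rw [List.Chain', List.isChain_map]
    refine hchain.imp ?_
    rintro a b ⟨h1, h2⟩
    constructor <;> simp <;> omega
  · rwa [shiftPath_map_fst]

lemma PStar.temporal {G : PEG V} {δ : TPath V} (h : δ ∈ PStar G) :
    IsTemporalPath G δ := by
  obtain ⟨δ₀, h₀, k, rfl⟩ := h
  exact temporal_shift k h₀.1

lemma pathVerts_length {p : List (Edge V)} (h : p ≠ []) :
    (pathVerts p).length = p.length + 1 := by
  match p, h with
  | e :: es, _ => simp [pathVerts]

lemma IsSimpleEdgePath.nodup {p : List (Edge V)} (h : IsSimpleEdgePath p) : p.Nodup := by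
  obtain ⟨hne, _, hnd⟩ := h
  match p, hne with
  | e :: es, _ =>
    have h2 : ((e :: es).map Prod.snd).Nodup := by
      have := hnd
      unfold pathVerts at this
      exact (List.nodup_cons.1 this).2
    exact List.Nodup.of_map _ h2

end Statement4Aux


section Statement4Aux2

variable {V : Type*}

/-! #### Uniqueness of time sequences from residues -/

private lemma chain_forward {Γ : ℕ} (hΓ : 1 ≤ Γ) :
    ∀ (τ τ' : List ℕ), τ.length = τ'.length →
    List.Chain' (fun a b => a < b ∧ b ≤ a + Γ) τ →
    List.Chain' (fun a b => a < b ∧ b ≤ a + Γ) τ' →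
    τ.map (· % Γ) = τ'.map (· % Γ) → τ.head? = τ'.head? → τ = τ'
  | [], [], _, _, _, _, _ => rfl
  | [], _ :: _, hlen, _, _, _, _ => by simp at hlen
  | _ :: _, [], hlen, _, _, _, _ => by simp at hlen
  | a :: l, a' :: l', hlen, hc, hc', hres, hhd => by
    obtain rfl : a = a' := by simpa using hhd
    have hlen' : l.length = l'.length := by simpa using hlen
    have hll : l.map (· % Γ) = l'.map (· % Γ) := by simpa using hres
    have hhd' : l.head? = l'.head? := by
      match l, l', hlen' with
      | [], [], _ => rfl
      | b :: t, b' :: t', _ =>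
        have hR : a < b ∧ b ≤ a + Γ := (List.isChain_cons_cons.1 hc).1
        have hR' : a < b' ∧ b' ≤ a + Γ := (List.isChain_cons_cons.1 hc').1
        have hbres : b % Γ = b' % Γ := by simpa using congrArg List.head? hll
        have : b = b' := eq_of_mod_eq_of_close hΓ hbres (by omega) (by omega)
        simp [this]
    have := chain_forward hΓ l l' hlen' hc.tail hc'.tail hll hhd'
    rw [this]

private lemma eq_of_anchor {Γ : ℕ} (hΓ : 1 ≤ Γ) :
    ∀ (j : ℕ) (τ τ' : List ℕ), τ.length = τ'.length →
    List.Chain' (fun a b => a < b ∧ b ≤ a + Γ) τ →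
    List.Chain' (fun a b => a < b ∧ b ≤ a + Γ) τ' →
    τ.map (· % Γ) = τ'.map (· % Γ) →
    ∀ (hj : j < τ.length) (hj' : j < τ'.length),
    τ.get ⟨j, hj⟩ = τ'.get ⟨j, hj'⟩ → τ = τ'
  | j, [], τ', hlen, _, _, _, hj, _, _ => by simp at hj
  | j, _ :: _, [], hlen, _, _, _, _, hj', _ => by simp at hj'
  | 0, a :: l, a' :: l', hlen, hc, hc', hres, hj, hj', hget => by
    refine chain_forward hΓ _ _ hlen hc hc' hres ?_
    simpa using hget
  | (j+1), a :: l, a' :: l', hlen, hc, hc', hres, hj, hj', hget => by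
    have hlen' : l.length = l'.length := by simpa using hlen
    have hll2 : l.map (· % Γ) = l'.map (· % Γ) := (by simpa using hres : _ ∧ _).2
    have hjl : j < l.length := by simpa using hj
    have hjl' : j < l'.length := by simpa using hj'
    have htl : l = l' :=
      eq_of_anchor hΓ j l l' hlen' hc.tail hc'.tail hll2 hjl hjl' (by simpa using hget)
    subst htl
    obtain rfl : a = a' := by
      match l, hjl with
      | b :: t, _ =>
        have hR : a < b ∧ b ≤ a + Γ := (List.isChain_cons_cons.1 hc).1
        have hR' : a' < b ∧ b ≤ a' + Γ := (List.isChain_cons_cons.1 hc').1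
        have hares : a % Γ = a' % Γ := by simpa using congrArg List.head? hres
        exact eq_of_mod_eq_of_close hΓ hares (by omega) (by omega)
    rfl

private lemma list_eq_of_map_eq {α β : Type*} :
    ∀ (l l' : List (α × β)), l.map Prod.fst = l'.map Prod.fst →
      l.map Prod.snd = l'.map Prod.snd → l = l'
  | [], [], _, _ => rfl
  | [], _ :: _, h1, _ => by simp at h1
  | _ :: _, [], h1, _ => by simp at h1
  | x :: l, y :: l', h1, h2 => by
    simp only [List.map_cons, List.cons.injEq] at h1 h2
    have := list_eq_of_map_eq l l' h1.2 h2.2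
    rw [this, Prod.ext h1.1 h2.1]

/-! #### Time bounds for foundation paths -/

private lemma chain_lt_bound {Γ : ℕ} :
    ∀ (τ : List ℕ) (b : ℕ),
    List.Chain' (fun a c => a < c ∧ c ≤ a + Γ) τ → (∀ h ∈ τ.head?, h < b) →
    ∀ x ∈ τ, x < b + Γ * τ.length
  | [], _, _, _ => by simp
  | a :: l, b, hc, hb => by
    intro x hx
    have ha : a < b := hb a rfl
    rcases List.mem_cons.1 hx with rfl | hx
    · have : 0 ≤ Γ * (l.length + 1) := Nat.zero_le _
      simp only [List.length_cons]
      omega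
    · have hb' : ∀ h ∈ l.head?, h < b + Γ := by
        match l with
        | [] => simp
        | c :: t =>
          intro h hh
          simp only [List.head?_cons, Option.mem_def, Option.some.injEq] at hh
          subst hh
          have hR : a < c ∧ c ≤ a + Γ := (List.isChain_cons_cons.1 hc).1
          omega
      have := chain_lt_bound l (b + Γ) hc.tail hb' x hx
      simp only [List.length_cons]
      have : b + Γ + Γ * l.length = b + Γ * (l.length + 1) := by ring
      omega

lemma foundation_time_lt [Fintype V] {G : PEG V} {δ : TPath V} (h : δ ∈ Foundation G) :
    ∀ x ∈ δ, x.2 < G.Γ * Fintype.card V := by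
  obtain ⟨⟨hne, hmem, hchain, hsimp⟩, hhd⟩ := h
  have hτ : List.Chain' (fun a c => a < c ∧ c ≤ a + G.Γ) (δ.map Prod.snd) :=
    (List.isChain_map _).2 hchain
  have hhd' : ∀ h' ∈ (δ.map Prod.snd).head?, h' < G.Γ := by
    intro h' hh'
    apply hhd
    rw [List.head?_map] at hh'
    exact hh'
  have hbd := chain_lt_bound (δ.map Prod.snd) G.Γ hτ hhd'
  intro x hxm
  have h1 := hbd x.2 (List.mem_map_of_mem hxm)
  have hpne : δ.map Prod.fst ≠ [] := hsimp.1
  have hlen : δ.length + 1 ≤ Fintype.card V := by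
    have h2 := hsimp.2.2.length_le_card
    rw [pathVerts_length hpne, List.length_map] at h2
    exact h2
  have h3 : G.Γ * (δ.length + 1) ≤ G.Γ * Fintype.card V := Nat.mul_le_mul_left _ hlen
  have h4 : G.Γ + G.Γ * δ.length = G.Γ * (δ.length + 1) := by ring
  rw [List.length_map] at h1
  omega

/-! #### Shift cancellation -/

lemma shift_cancel {G : PEG V} {δ δ' : TPath V} {k k' : ℕ}
    (h : δ ∈ Foundation G) (h' : δ' ∈ Foundation G)
    (heq : shiftPath G.Γ k δ = shiftPath G.Γ k' δ') : δ = δ' := by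
  have hne : δ ≠ [] := h.1.1
  have hne' : δ' ≠ [] := h'.1.1
  match δ, δ', hne, hne' with
  | x :: l, y :: l', _, _ =>
    have hx : x.2 < G.Γ := h.2 x.2 rfl
    have hy : y.2 < G.Γ := h'.2 y.2 rfl
    have hhd : (x.1, x.2 + k * G.Γ) = (y.1, y.2 + k' * G.Γ) := by
      have := congrArg List.head? heq
      simpa [shiftPath] using this
    have htime : x.2 + k * G.Γ = y.2 + k' * G.Γ := congrArg Prod.snd hhd
    have hxy : x.2 = y.2 := by
      have := congrArg (· % G.Γ) htime
      simpa [Nat.add_mul_mod_self_right, Nat.mod_eq_of_lt hx, Nat.mod_eq_of_lt hy] using this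
    have hk : k = k' := by
      have hmul : k * G.Γ = k' * G.Γ := by omega
      exact Nat.eq_of_mul_eq_mul_right G.Γ_pos hmul
    subst hk
    exact shiftPath_injective G.Γ k heq

/-! #### Arithmetic for the window argument -/

private lemma shift_time_eq {Γ K t : ℕ} (hΓ : 1 ≤ Γ) (ht : t < Γ * K) :
    t + (K - t / Γ) * Γ = K * Γ + t % Γ := by
  have h1 : t / Γ < K := by
    rw [Nat.div_lt_iff_lt_mul (by omega), Nat.mul_comm]
    exact ht
  have h2 := Nat.div_add_mod t Γ
  have h3 : (K - t / Γ) * Γ = K * Γ - t / Γ * Γ := Nat.sub_mul _ _ _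
  have h4 : t / Γ * Γ = Γ * (t / Γ) := Nat.mul_comm _ _
  have h5 : t / Γ * Γ ≤ K * Γ := Nat.mul_le_mul_right _ h1.le
  have h6 : Γ * K = K * Γ := Nat.mul_comm _ _
  omega

/-! #### Foundation path edges -/

lemma mem_unionEdges_of_temporal {G : PEG V} {δ : TPath V} (h : IsTemporalPath G δ)
    {a : Edge V} (ha : a ∈ δ.map Prod.fst) : a ∈ UnionEdges G := by
  obtain ⟨x, hx, rfl⟩ := List.mem_map.1 ha
  refine ⟨x.2 % G.Γ, Nat.mod_lt _ G.Γ_pos, ?_⟩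
  rw [G.E_mod]
  exact h.2.1 x hx

lemma edges_mem_unionPaths {G : PEG V} {δ : TPath V} (h : IsTemporalPath G δ) :
    δ.map Prod.fst ∈ UnionPaths G :=
  ⟨fun _ ha => mem_unionEdges_of_temporal h ha, h.2.2.2⟩

end Statement4Aux2


section Statement4DirA

variable {V : Type*}

/-- Total capacity over one period. -/
noncomputable def Ctot (G : PEG V) (e : Edge V) : ℝ≥0 := ∑ t ∈ Finset.range G.Γ, G.c t e

lemma unionCap_eq (G : PEG V) (e : Edge V) :
    unionCap G e = capFactor G * (Ctot G e : ℝ≥0∞) := by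
  unfold unionCap Ctot
  rw [ENNReal.coe_finset_sum]

lemma capFactor_ne_top (G : PEG V) : capFactor G ≠ ∞ := by
  refine ne_of_lt (ENNReal.div_lt_top ENNReal.coe_ne_top ?_)
  simp [G.Γ_ne_zero]

/-- The aggregated flow on a fixed edge list. -/
noncomputable def SA (G : PEG V) (F : TPath V → ℝ≥0) (p : List (Edge V)) : ℝ≥0∞ :=
  ∑' δ : {δ : TPath V // δ ∈ Foundation G ∧ δ.map Prod.fst = p}, (F δ.1 : ℝ≥0∞)

lemma SA_ne_top [Fintype V] (G : PEG V) {F : TPath V → ℝ≥0}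
    (hleg : IsLegalTemporalFlow G F) (p : List (Edge V)) : SA G F p ≠ ∞ := by
  cases p with
  | nil =>
    have hE : IsEmpty {δ : TPath V // δ ∈ Foundation G ∧ δ.map Prod.fst = ([] : List (Edge V))} := by
      refine ⟨?_⟩
      rintro ⟨δ, hδ, hmap⟩
      exact hδ.1.1 (List.map_eq_nil_iff.1 hmap)
    unfold SA
    rw [tsum_empty]
    exact ENNReal.zero_ne_top
  | cons e₀ p' =>
    have key : ∀ (δ : TPath V), δ ∈ Foundation G → δ.map Prod.fst = e₀ :: p' →
        tStart δ < G.Γ ∧ (e₀, tStart δ) ∈ δ := by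
      intro δ hδ hmap
      have hne := hδ.1.1
      match δ, hne with
      | x :: l, _ =>
        have hfst : x.1 = e₀ := by simpa using congrArg List.head? hmap
        have hts : tStart (x :: l) = x.2 := by simp [tStart]
        constructor
        · rw [hts]; exact hδ.2 x.2 rfl
        · rw [hts, ← hfst]
          exact List.mem_cons_self
    let f : {δ : TPath V // δ ∈ Foundation G ∧ δ.map Prod.fst = e₀ :: p'} →
        Σ r : Fin G.Γ, {σ : TPath V // σ ∈ PStar G ∧ (e₀, (r : ℕ)) ∈ σ} :=
      fun δs => ⟨⟨tStart δs.1, (key δs.1 δs.2.1 δs.2.2).1⟩,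
        ⟨δs.1, Foundation.mem_pstar δs.2.1, (key δs.1 δs.2.1 δs.2.2).2⟩⟩
    have hfinj : Function.Injective f := by
      intro a b h
      have h2 : a.1 = b.1 := congrArg (fun x => x.2.1) h
      exact Subtype.ext h2
    have hb : SA G F (e₀ :: p')
        ≤ ∑' x : Σ r : Fin G.Γ, {σ : TPath V // σ ∈ PStar G ∧ (e₀, (r : ℕ)) ∈ σ},
            (F x.2.1 : ℝ≥0∞) :=
      ENNReal.tsum_comp_le_tsum_of_injective hfinj
        (fun x : Σ r : Fin G.Γ, {σ : TPath V // σ ∈ PStar G ∧ (e₀, (r : ℕ)) ∈ σ} =>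
          (F x.2.1 : ℝ≥0∞))
    have hc : ∑' x : Σ r : Fin G.Γ, {σ : TPath V // σ ∈ PStar G ∧ (e₀, (r : ℕ)) ∈ σ},
          (F x.2.1 : ℝ≥0∞) ≤ ∑' r : Fin G.Γ, (G.c (r : ℕ) e₀ : ℝ≥0∞) := by
      refine le_trans (le_of_eq (ENNReal.tsum_sigma'
        (fun x : Σ r : Fin G.Γ, {σ : TPath V // σ ∈ PStar G ∧ (e₀, (r : ℕ)) ∈ σ} =>
          (F x.2.1 : ℝ≥0∞)))) ?_
      exact ENNReal.tsum_le_tsum fun r => hleg.capacity e₀ (r : ℕ)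
    have hd : ∑' r : Fin G.Γ, (G.c (r : ℕ) e₀ : ℝ≥0∞) < ∞ := by
      rw [tsum_fintype]
      exact ENNReal.sum_lt_top.2 fun r _ => ENNReal.coe_lt_top
    exact ne_of_lt (lt_of_le_of_lt (le_trans hb hc) hd)

lemma directionA [Fintype V] [DecidableEq V] (G : PEG V) (m : V → V → ℝ≥0) {θ : ℝ≥0∞}
    (hθ : ∃ F : TPath V → ℝ≥0, IsLegalTemporalFlow G F ∧ AchievesThroughputT G F m θ) :
    ∃ F' : List (Edge V) → ℝ≥0, IsLegalUnionFlow G F' ∧ AchievesThroughputU G F' m θ := by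
  classical
  obtain ⟨F, hleg, hthr⟩ := hθ
  have hF'coe : ∀ p, (((capFactor G * SA G F p).toNNReal : ℝ≥0) : ℝ≥0∞)
      = capFactor G * SA G F p := fun p =>
    ENNReal.coe_toNNReal (ENNReal.mul_ne_top (capFactor_ne_top G) (SA_ne_top G hleg p))
  refine ⟨fun p => (capFactor G * SA G F p).toNNReal, ?_, ?_⟩
  · -- capacity
    intro e he
    have hstep1 : ∑' p : {p : List (Edge V) // p ∈ UnionPaths G ∧ e ∈ p},
          (((capFactor G * SA G F p.1).toNNReal : ℝ≥0) : ℝ≥0∞)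
        = capFactor G * ∑' p : {p : List (Edge V) // p ∈ UnionPaths G ∧ e ∈ p},
            SA G F p.1 := by
      rw [← ENNReal.tsum_mul_left]
      exact tsum_congr fun p => hF'coe p.1
    rw [hstep1, unionCap_eq]
    refine mul_le_mul_right ?_ _
    have h2 : (∑' p : {p : List (Edge V) // p ∈ UnionPaths G ∧ e ∈ p}, SA G F p.1)
        = ∑' x : Σ p : {p : List (Edge V) // p ∈ UnionPaths G ∧ e ∈ p},
            {δ : TPath V // δ ∈ Foundation G ∧ δ.map Prod.fst = p.1}, (F x.2.1 : ℝ≥0∞) :=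
      (ENNReal.tsum_sigma'
        (fun x : Σ p : {p : List (Edge V) // p ∈ UnionPaths G ∧ e ∈ p},
            {δ : TPath V // δ ∈ Foundation G ∧ δ.map Prod.fst = p.1} =>
          (F x.2.1 : ℝ≥0∞))).symm
    rw [h2]
    have h3 : ∑' x : Σ p : {p : List (Edge V) // p ∈ UnionPaths G ∧ e ∈ p},
          {δ : TPath V // δ ∈ Foundation G ∧ δ.map Prod.fst = p.1}, (F x.2.1 : ℝ≥0∞)
        ≤ ∑' δ : {δ : TPath V // δ ∈ Foundation G ∧ e ∈ δ.map Prod.fst}, (F δ.1 : ℝ≥0∞) := by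
      refine ENNReal.tsum_comp_le_tsum_of_injective
        (f := fun x : Σ p : {p : List (Edge V) // p ∈ UnionPaths G ∧ e ∈ p},
            {δ : TPath V // δ ∈ Foundation G ∧ δ.map Prod.fst = p.1} =>
          (⟨x.2.1, x.2.2.1, by rw [x.2.2.2]; exact x.1.2.2⟩ :
            {δ : TPath V // δ ∈ Foundation G ∧ e ∈ δ.map Prod.fst})) ?_
        (fun δ => (F δ.1 : ℝ≥0∞))
      rintro ⟨⟨p, hp⟩, ⟨δ, hδ⟩⟩ ⟨⟨q, hq⟩, ⟨ε, hε⟩⟩ h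
      have hde : δ = ε := congrArg Subtype.val h
      subst hde
      obtain rfl : p = q := hδ.2.symm.trans hε.2
      rfl
    refine le_trans h3 ?_
    -- window argument
    have key : ∀ δs : {δ : TPath V // δ ∈ Foundation G ∧ e ∈ δ.map Prod.fst},
        ∃ t : ℕ, (e, t) ∈ δs.1 := by
      rintro ⟨δ, hδ, he'⟩
      obtain ⟨x, hx, hfst⟩ := List.mem_map.1 he'
      refine ⟨x.2, ?_⟩
      show (e, x.2) ∈ δ
      rw [← hfst]
      simpa using hx
    have tmem : ∀ δs, (e, (key δs).choose) ∈ δs.1 := fun δs => (key δs).choose_spec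
    have tlt : ∀ δs, (key δs).choose < G.Γ * Fintype.card V := fun δs =>
      foundation_time_lt δs.2.1 _ (tmem δs)
    let f2 : {δ : TPath V // δ ∈ Foundation G ∧ e ∈ δ.map Prod.fst} →
        Σ r : Fin G.Γ, {σ : TPath V //
          σ ∈ PStar G ∧ (e, Fintype.card V * G.Γ + (r : ℕ)) ∈ σ} :=
      fun δs => ⟨⟨(key δs).choose % G.Γ, Nat.mod_lt _ G.Γ_pos⟩,
        ⟨shiftPath G.Γ (Fintype.card V - (key δs).choose / G.Γ) δs.1,
          PStar.shift (Foundation.mem_pstar δs.2.1) _, by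
          have h5 := mem_shiftPath (Γ := G.Γ)
            (k := Fintype.card V - (key δs).choose / G.Γ) (tmem δs)
          rwa [shift_time_eq G.Γ_pos (tlt δs)] at h5⟩⟩
    have hf2inj : Function.Injective f2 := by
      intro a b h
      have h6 : shiftPath G.Γ (Fintype.card V - (key a).choose / G.Γ) a.1
          = shiftPath G.Γ (Fintype.card V - (key b).choose / G.Γ) b.1 :=
        congrArg (fun x => x.2.1) h
      exact Subtype.ext (shift_cancel a.2.1 b.2.1 h6)
    calc ∑' δs : {δ : TPath V // δ ∈ Foundation G ∧ e ∈ δ.map Prod.fst}, (F δs.1 : ℝ≥0∞)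
        = ∑' δs : {δ : TPath V // δ ∈ Foundation G ∧ e ∈ δ.map Prod.fst},
            ((fun x : Σ r : Fin G.Γ, {σ : TPath V //
                σ ∈ PStar G ∧ (e, Fintype.card V * G.Γ + (r : ℕ)) ∈ σ} =>
              (F x.2.1 : ℝ≥0∞)) (f2 δs)) := by
          refine tsum_congr fun δs => ?_
          show (F δs.1 : ℝ≥0∞)
            = (F (shiftPath G.Γ (Fintype.card V - (key δs).choose / G.Γ) δs.1) : ℝ≥0∞)
          rw [hleg.shift_eq (Foundation.mem_pstar δs.2.1)]
      _ ≤ ∑' x : Σ r : Fin G.Γ, {σ : TPath V //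
            σ ∈ PStar G ∧ (e, Fintype.card V * G.Γ + (r : ℕ)) ∈ σ},
            (F x.2.1 : ℝ≥0∞) :=
          ENNReal.tsum_comp_le_tsum_of_injective hf2inj _
      _ ≤ ∑' r : Fin G.Γ, (G.c (Fintype.card V * G.Γ + (r : ℕ)) e : ℝ≥0∞) := by
          refine le_trans (le_of_eq (ENNReal.tsum_sigma'
            (fun x : Σ r : Fin G.Γ, {σ : TPath V //
                σ ∈ PStar G ∧ (e, Fintype.card V * G.Γ + (r : ℕ)) ∈ σ} =>
              (F x.2.1 : ℝ≥0∞)))) ?_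
          exact ENNReal.tsum_le_tsum fun r => hleg.capacity e _
      _ = (Ctot G e : ℝ≥0∞) := by
          rw [tsum_fintype]
          have hcong : ∀ r : Fin G.Γ,
              (G.c (Fintype.card V * G.Γ + (r : ℕ)) e : ℝ≥0∞) = (G.c (r : ℕ) e : ℝ≥0∞) := by
            intro r
            rw [Nat.add_comm, G.c_add_mul]
          rw [Finset.sum_congr rfl fun r _ => hcong r]
          rw [Fin.sum_univ_eq_sum_range (fun t => (G.c t e : ℝ≥0∞)) G.Γ]
          unfold Ctot
          rw [ENNReal.coe_finset_sum]
  · -- throughput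
    intro s d
    refine le_trans (hthr s d) ?_
    have hstep1 : ∑' p : {p : List (Edge V) // p ∈ UnionPaths G ∧ EndpointsOf p s d},
          (((capFactor G * SA G F p.1).toNNReal : ℝ≥0) : ℝ≥0∞)
        = capFactor G * ∑' p : {p : List (Edge V) // p ∈ UnionPaths G ∧ EndpointsOf p s d},
            SA G F p.1 := by
      rw [← ENNReal.tsum_mul_left]
      exact tsum_congr fun p => hF'coe p.1
    rw [hstep1]
    refine mul_le_mul_right ?_ _
    have h2 : (∑' p : {p : List (Edge V) // p ∈ UnionPaths G ∧ EndpointsOf p s d}, SA G F p.1)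
        = ∑' x : Σ p : {p : List (Edge V) // p ∈ UnionPaths G ∧ EndpointsOf p s d},
            {δ : TPath V // δ ∈ Foundation G ∧ δ.map Prod.fst = p.1}, (F x.2.1 : ℝ≥0∞) :=
      (ENNReal.tsum_sigma'
        (fun x : Σ p : {p : List (Edge V) // p ∈ UnionPaths G ∧ EndpointsOf p s d},
            {δ : TPath V // δ ∈ Foundation G ∧ δ.map Prod.fst = p.1} =>
          (F x.2.1 : ℝ≥0∞))).symm
    rw [h2]
    refine ENNReal.tsum_comp_le_tsum_of_injective
      (f := fun δs : FoundationSD G s d =>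
        (⟨⟨δs.1.map Prod.fst, edges_mem_unionPaths δs.2.1.1, δs.2.2⟩, ⟨δs.1, δs.2.1, rfl⟩⟩ :
          Σ p : {p : List (Edge V) // p ∈ UnionPaths G ∧ EndpointsOf p s d},
            {δ : TPath V // δ ∈ Foundation G ∧ δ.map Prod.fst = p.1})) ?_
      (fun x => (F x.2.1 : ℝ≥0∞))
    intro a b h
    have hde : a.1 = b.1 := congrArg (fun x => x.2.1) h
    exact Subtype.ext hde

end Statement4DirA


section Statement4Mk

variable {V : Type*}

/-- The unique time `u` with `t < u ≤ t + Γ` and `u % Γ = r` (for `r < Γ`). -/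
def nextT (Γ t r : ℕ) : ℕ := t + 1 + (r + Γ - (t + 1) % Γ) % Γ

lemma nextT_lt {Γ t r : ℕ} : t < nextT Γ t r := by
  unfold nextT
  omega

lemma nextT_le {Γ t r : ℕ} (hΓ : 1 ≤ Γ) : nextT Γ t r ≤ t + Γ := by
  have h1 : (r + Γ - (t + 1) % Γ) % Γ < Γ := Nat.mod_lt _ (by omega)
  unfold nextT
  omega

lemma nextT_mod {Γ r : ℕ} (hΓ : 1 ≤ Γ) (hr : r < Γ) (t : ℕ) : nextT Γ t r % Γ = r := by
  unfold nextT
  have h1 : (t + 1) % Γ < Γ := Nat.mod_lt _ (by omega)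
  rw [Nat.add_mod_mod]
  have h2 : t + 1 + (r + Γ - (t + 1) % Γ) = Γ * ((t + 1) / Γ) + (r + Γ) := by
    have h3 := Nat.div_add_mod (t + 1) Γ
    omega
  rw [h2, Nat.mul_add_mod, Nat.add_mod_right, Nat.mod_eq_of_lt hr]

/-- Build a temporal path from a list of edges and a list of residues,
starting strictly after time `t`. -/
def mkT (Γ : ℕ) : ℕ → List (Edge V) → List ℕ → TPath V
  | _, [], _ => []
  | _, _ :: _, [] => []
  | t, a :: q, r :: ρ => (a, nextT Γ t r) :: mkT Γ (nextT Γ t r) q ρ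

/-- Build a temporal path from a list of edges and a list of residues,
starting exactly at the first residue. -/
def mk0 (Γ : ℕ) : List (Edge V) → List ℕ → TPath V
  | [], _ => []
  | _ :: _, [] => []
  | a :: q, r :: ρ => (a, r) :: mkT Γ r q ρ

lemma mkT_map_fst (Γ : ℕ) :
    ∀ (t : ℕ) (q : List (Edge V)) (ρ : List ℕ), ρ.length = q.length →
    (mkT Γ t q ρ).map Prod.fst = q
  | _, [], _, _ => by simp [mkT]
  | _, _ :: _, [], h => by simp at h
  | t, a :: q, r :: ρ, h => by
    simp only [mkT, List.map_cons, List.cons.injEq, true_and]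
    exact mkT_map_fst Γ _ q ρ (by simpa using h)

lemma mk0_map_fst (Γ : ℕ) {q : List (Edge V)} {ρ : List ℕ} (h : ρ.length = q.length) :
    (mk0 Γ q ρ).map Prod.fst = q := by
  match q, ρ, h with
  | [], _, _ => simp [mk0]
  | _ :: _, [], h => simp at h
  | a :: q, r :: ρ, h =>
    simp only [mk0, List.map_cons, List.cons.injEq, true_and]
    exact mkT_map_fst Γ _ q ρ (by simpa using h)

lemma mkT_map_mod {Γ : ℕ} (hΓ : 1 ≤ Γ) :
    ∀ (t : ℕ) (q : List (Edge V)) (ρ : List ℕ), ρ.length = q.length → (∀ r ∈ ρ, r < Γ) →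
    (mkT Γ t q ρ).map (fun x => x.2 % Γ) = ρ
  | _, [], ρ, h, _ => by
    have : ρ = [] := List.length_eq_zero_iff.1 (by simpa using h)
    simp [this, mkT]
  | _, _ :: _, [], h, _ => by simp at h
  | t, a :: q, r :: ρ, h, hlt => by
    simp only [mkT, List.map_cons, List.cons.injEq]
    refine ⟨nextT_mod hΓ (hlt r (by simp)) t, ?_⟩
    exact mkT_map_mod hΓ _ q ρ (by simpa using h) (fun r' hr' => hlt r' (by simp [hr']))

lemma mk0_map_mod {Γ : ℕ} (hΓ : 1 ≤ Γ) {q : List (Edge V)} {ρ : List ℕ}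
    (h : ρ.length = q.length) (hlt : ∀ r ∈ ρ, r < Γ) :
    (mk0 Γ q ρ).map (fun x => x.2 % Γ) = ρ := by
  match q, ρ, h, hlt with
  | [], ρ', h, _ =>
    have hρ : ρ' = [] := List.length_eq_zero_iff.1 (by simpa using h)
    simp [hρ, mk0]
  | _ :: _, [], h, _ => simp at h
  | a :: q, r :: ρ, h, hlt =>
    simp only [mk0, List.map_cons, List.cons.injEq]
    refine ⟨Nat.mod_eq_of_lt (hlt r (by simp)), ?_⟩
    exact mkT_map_mod hΓ _ q ρ (by simpa using h) (fun r' hr' => hlt r' (by simp [hr']))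

lemma mkT_chain {Γ : ℕ} (hΓ : 1 ≤ Γ) :
    ∀ (t : ℕ) (q : List (Edge V)) (ρ : List ℕ),
    List.Chain' (fun x y => x.2 < y.2 ∧ y.2 ≤ x.2 + Γ) (mkT Γ t q ρ) ∧
    (∀ y ∈ (mkT Γ t q ρ).head?, t < y.2 ∧ y.2 ≤ t + Γ)
  | t, [], ρ => by simp [mkT, List.Chain']
  | t, _ :: _, [] => by simp [mkT, List.Chain']
  | t, a :: q, r :: ρ => by
    obtain ⟨ih1, ih2⟩ := mkT_chain hΓ (nextT Γ t r) q ρ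
    constructor
    · rw [show mkT Γ t (a :: q) (r :: ρ) = (a, nextT Γ t r) :: mkT Γ (nextT Γ t r) q ρ from rfl]
      refine List.isChain_cons.2 ⟨?_, ih1⟩
      intro y hy
      have := ih2 y hy
      exact ⟨this.1, this.2⟩
    · intro y hy
      simp only [mkT, List.head?_cons, Option.mem_def, Option.some.injEq] at hy
      subst hy
      exact ⟨nextT_lt, nextT_le hΓ⟩

lemma mk0_chain {Γ : ℕ} (hΓ : 1 ≤ Γ) (q : List (Edge V)) (ρ : List ℕ) :
    List.Chain' (fun x y => x.2 < y.2 ∧ y.2 ≤ x.2 + Γ) (mk0 Γ q ρ) := by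
  match q, ρ with
  | [], _ => simp [mk0, List.Chain']
  | _ :: _, [] => simp [mk0, List.Chain']
  | a :: q, r :: ρ =>
    obtain ⟨ih1, ih2⟩ := mkT_chain (V := V) hΓ r q ρ
    rw [show mk0 Γ (a :: q) (r :: ρ) = (a, r) :: mkT Γ r q ρ from rfl]
    exact List.isChain_cons.2 ⟨fun y hy => ih2 y hy, ih1⟩

lemma mkT_mem (G : PEG V) :
    ∀ (t : ℕ) (q : List (Edge V)) (ρ : List ℕ),
    (∀ z ∈ q.zip ρ, z.1 ∈ G.E z.2 ∧ z.2 < G.Γ) →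
    ∀ x ∈ mkT G.Γ t q ρ, x.1 ∈ G.E x.2
  | t, [], ρ, _ => by simp [mkT]
  | t, _ :: _, [], _ => by simp [mkT]
  | t, a :: q, r :: ρ, hz => by
    intro x hx
    rw [show mkT G.Γ t (a :: q) (r :: ρ) = (a, nextT G.Γ t r) :: mkT G.Γ (nextT G.Γ t r) q ρ
      from rfl] at hx
    rcases List.mem_cons.1 hx with rfl | hx
    · have hz0 := hz (a, r) (by simp [List.zip_cons_cons])
      show a ∈ G.E (nextT G.Γ t r)
      rw [← G.E_mod, nextT_mod G.Γ_pos hz0.2]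
      exact hz0.1
    · exact mkT_mem G _ q ρ (fun z hzz => hz z (by simp [List.zip_cons_cons, hzz])) x hx

lemma mk0_mem (G : PEG V) (q : List (Edge V)) (ρ : List ℕ)
    (hz : ∀ z ∈ q.zip ρ, z.1 ∈ G.E z.2 ∧ z.2 < G.Γ) :
    ∀ x ∈ mk0 G.Γ q ρ, x.1 ∈ G.E x.2 := by
  match q, ρ with
  | [], _ => simp [mk0, List.Chain']
  | _ :: _, [] => simp [mk0, List.Chain']
  | a :: q, r :: ρ =>
    intro x hx
    rw [show mk0 G.Γ (a :: q) (r :: ρ) = (a, r) :: mkT G.Γ r q ρ from rfl] at hx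
    rcases List.mem_cons.1 hx with rfl | hx
    · exact (hz (a, r) (by simp [List.zip_cons_cons])).1
    · exact mkT_mem G _ q ρ (fun z hzz => hz z (by simp [List.zip_cons_cons, hzz])) x hx

lemma mk0_ne_nil {Γ : ℕ} {q : List (Edge V)} {ρ : List ℕ}
    (hq : q ≠ []) (h : ρ.length = q.length) : mk0 Γ q ρ ≠ [] := by
  match q, ρ, hq, h with
  | _ :: _, [], _, h => simp at h
  | a :: q, r :: ρ, _, _ => simp [mk0]

lemma mk0_head {Γ : ℕ} {q : List (Edge V)} {ρ : List ℕ} {a : Edge V} {r : ℕ}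
    (hq : q ≠ []) (h : ρ.length = q.length) (hqh : q.head? = some a) (hρh : ρ.head? = some r) :
    (mk0 Γ q ρ).head? = some (a, r) := by
  match q, ρ, hq, h with
  | _ :: _, [], _, h => simp at h
  | a' :: q, r' :: ρ, _, _ =>
    obtain rfl : a' = a := by simpa using hqh
    obtain rfl : r' = r := by simpa using hρh
    simp [mk0]

end Statement4Mk


section Statement4W

variable {V : Type*}

/-- The time-splitting ratio. -/
noncomputable def ratio0 (G : PEG V) (a : Edge V) (r : ℕ) : ℝ≥0 := G.c r a / Ctot G a

/-- The scaling constant `Γ/(1-Δu)`. -/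
noncomputable def K0 (G : PEG V) : ℝ≥0 := (G.Γ : ℝ≥0) / (1 - G.Δu)

lemma subU_ne_zero (G : PEG V) : (1 : ℝ≥0) - G.Δu ≠ 0 :=
  ne_of_gt (tsub_pos_of_lt G.Δu_lt_one)

lemma K0_mul_capFactor (G : PEG V) : ((K0 G : ℝ≥0) : ℝ≥0∞) * capFactor G = 1 := by
  have hu : ((1 - G.Δu : ℝ≥0) : ℝ≥0∞) ≠ 0 := ENNReal.coe_ne_zero.2 (subU_ne_zero G)
  have hu' : ((1 - G.Δu : ℝ≥0) : ℝ≥0∞) ≠ ∞ := ENNReal.coe_ne_top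
  have hg : ((G.Γ : ℕ) : ℝ≥0∞) ≠ 0 := by simp [G.Γ_ne_zero]
  have hg' : ((G.Γ : ℕ) : ℝ≥0∞) ≠ ∞ := ENNReal.natCast_ne_top _
  unfold K0 capFactor
  rw [ENNReal.coe_div (subU_ne_zero G), ENNReal.coe_natCast, div_eq_mul_inv, div_eq_mul_inv]
  calc ((G.Γ : ℝ≥0∞) * ((1 - G.Δu : ℝ≥0) : ℝ≥0∞)⁻¹)
        * (((1 - G.Δu : ℝ≥0) : ℝ≥0∞) * ((G.Γ : ℝ≥0∞))⁻¹)
      = ((G.Γ : ℝ≥0∞) * ((G.Γ : ℝ≥0∞))⁻¹)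
        * ((((1 - G.Δu : ℝ≥0) : ℝ≥0∞))⁻¹ * ((1 - G.Δu : ℝ≥0) : ℝ≥0∞)) := by ring
    _ = 1 := by
        rw [ENNReal.mul_inv_cancel hg hg', ENNReal.inv_mul_cancel hu hu', mul_one]

/-- The temporal flow induced by a union flow. -/
noncomputable def FB (G : PEG V) (F' : List (Edge V) → ℝ≥0) (δ : TPath V) : ℝ≥0 :=
  K0 G * F' (δ.map Prod.fst) * (δ.map fun x => ratio0 G x.1 (x.2 % G.Γ)).prod

/-- The weight of a residue list for a given edge list. -/
noncomputable def Wc (G : PEG V) (q : List (Edge V)) (ρ : List ℕ) : ℝ≥0 :=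
  if ρ.length = q.length ∧ (∀ r ∈ ρ, r < G.Γ) ∧ (∀ z ∈ q.zip ρ, G.c z.2 z.1 ≠ 0)
  then ((q.zip ρ).map fun z => ratio0 G z.1 z.2).prod else 0

lemma Wc_nil (G : PEG V) (ρ : List ℕ) : Wc G [] ρ = if ρ = [] then 1 else 0 := by
  cases ρ with
  | nil => simp [Wc]
  | cons r ρ => simp [Wc]

lemma Wc_cons (G : PEG V) (a : Edge V) (q : List (Edge V)) (r : ℕ) (ρ : List ℕ) :
    Wc G (a :: q) (r :: ρ)
      = (if r < G.Γ ∧ G.c r a ≠ 0 then ratio0 G a r else 0) * Wc G q ρ := by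
  unfold Wc
  by_cases h1 : r < G.Γ ∧ G.c r a ≠ 0
  · by_cases h2 : ρ.length = q.length ∧ (∀ r' ∈ ρ, r' < G.Γ) ∧ (∀ z ∈ q.zip ρ, G.c z.2 z.1 ≠ 0)
    · have hc : (r :: ρ).length = (a :: q).length ∧ (∀ r' ∈ r :: ρ, r' < G.Γ)
          ∧ (∀ z ∈ (a :: q).zip (r :: ρ), G.c z.2 z.1 ≠ 0) := by
        refine ⟨by simp [h2.1], ?_, ?_⟩
        · intro r' hr'
          rcases List.mem_cons.1 hr' with rfl | hr'
          exacts [h1.1, h2.2.1 _ hr']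
        · intro z hz
          rw [List.zip_cons_cons] at hz
          rcases List.mem_cons.1 hz with rfl | hz
          exacts [h1.2, h2.2.2 _ hz]
      rw [if_pos hc, if_pos h1, if_pos h2, List.zip_cons_cons, List.map_cons, List.prod_cons]
    · have hc : ¬((r :: ρ).length = (a :: q).length ∧ (∀ r' ∈ r :: ρ, r' < G.Γ)
          ∧ (∀ z ∈ (a :: q).zip (r :: ρ), G.c z.2 z.1 ≠ 0)) := by
        intro hcon
        refine h2 ⟨by simpa using hcon.1, fun r' hr' => hcon.2.1 r' (by simp [hr']), ?_⟩
        intro z hz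
        refine hcon.2.2 z ?_
        rw [List.zip_cons_cons]
        simp [hz]
      rw [if_neg hc, if_pos h1, if_neg h2, mul_zero]
  · have hc : ¬((r :: ρ).length = (a :: q).length ∧ (∀ r' ∈ r :: ρ, r' < G.Γ)
        ∧ (∀ z ∈ (a :: q).zip (r :: ρ), G.c z.2 z.1 ≠ 0)) := by
      intro hcon
      refine h1 ⟨hcon.2.1 r (by simp), hcon.2.2 (a, r) ?_⟩
      rw [List.zip_cons_cons]
      simp
    rw [if_neg hc, if_neg h1, zero_mul]

lemma map_ratio_eq (G : PEG V) (l : TPath V) :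
    (l.map fun x => ratio0 G x.1 (x.2 % G.Γ))
      = ((l.map Prod.fst).zip (l.map fun x => x.2 % G.Γ)).map fun z => ratio0 G z.1 z.2 := by
  rw [List.zip_map' (f := Prod.fst) (g := fun x => x.2 % G.Γ) (l := l), List.map_map]
  rfl

lemma Wc_tpath (G : PEG V) (l : TPath V) (hc : ∀ x ∈ l, G.c (x.2 % G.Γ) x.1 ≠ 0) :
    Wc G (l.map Prod.fst) (l.map fun x => x.2 % G.Γ)
      = (l.map fun x => ratio0 G x.1 (x.2 % G.Γ)).prod := by
  have hcond : (l.map fun x => x.2 % G.Γ).length = (l.map Prod.fst).length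
      ∧ (∀ r ∈ l.map fun x => x.2 % G.Γ, r < G.Γ)
      ∧ (∀ z ∈ (l.map Prod.fst).zip (l.map fun x => x.2 % G.Γ), G.c z.2 z.1 ≠ 0) := by
    refine ⟨by simp, ?_, ?_⟩
    · intro r hr
      obtain ⟨x, hx, rfl⟩ := List.mem_map.1 hr
      exact Nat.mod_lt _ G.Γ_pos
    · intro z hz
      rw [List.zip_map' (f := Prod.fst) (g := fun x => x.2 % G.Γ) (l := l)] at hz
      obtain ⟨x, hx, rfl⟩ := List.mem_map.1 hz
      exact hc x hx
  unfold Wc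
  rw [if_pos hcond, ← map_ratio_eq]

lemma sumWc (G : PEG V) :
    ∀ q : List (Edge V), (∑' ρ : List ℕ, (Wc G q ρ : ℝ≥0∞))
      = (q.map fun a => ((Ctot G a / Ctot G a : ℝ≥0) : ℝ≥0∞)).prod
  | [] => by
    rw [tsum_eq_single ([] : List ℕ) (fun ρ hρ => by simp [Wc_nil, hρ])]
    simp [Wc_nil]
  | a :: q => by
    have hbij : (∑' ρ : List ℕ, (Wc G (a :: q) ρ : ℝ≥0∞))
        = ∑' z : ℕ × List ℕ,
            (((if z.1 < G.Γ ∧ G.c z.1 a ≠ 0 then ratio0 G a z.1 else 0) : ℝ≥0) : ℝ≥0∞)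
              * (Wc G q z.2 : ℝ≥0∞) := by
      refine (tsum_eq_tsum_of_ne_zero_bij (fun z => z.1.1 :: z.1.2) ?_ ?_ ?_)
      · rintro ⟨⟨r, ρ⟩, _⟩ ⟨⟨r', ρ'⟩, _⟩ h
        simp only [List.cons.injEq] at h
        exact Subtype.ext (Prod.ext h.1 h.2)
      · intro ρ hρ
        rw [Function.mem_support] at hρ
        match ρ with
        | [] =>
          exact absurd (by simp [Wc] : ((Wc G (a :: q) ([] : List ℕ) : ℝ≥0) : ℝ≥0∞) = 0) hρ
        | r :: ρ' =>
          have hval : ((Wc G (a :: q) (r :: ρ') : ℝ≥0) : ℝ≥0∞)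
              = (((if r < G.Γ ∧ G.c r a ≠ 0 then ratio0 G a r else 0) : ℝ≥0) : ℝ≥0∞)
                * (Wc G q ρ' : ℝ≥0∞) := by
            rw [Wc_cons, ENNReal.coe_mul]
          refine ⟨⟨(r, ρ'), ?_⟩, rfl⟩
          rw [Function.mem_support, ← hval]
          exact hρ
      · rintro ⟨⟨r, ρ⟩, _⟩
        show ((Wc G (a :: q) (r :: ρ) : ℝ≥0) : ℝ≥0∞) = _
        rw [Wc_cons, ENNReal.coe_mul]
    rw [hbij, ENNReal.tsum_prod']
    have hml : ∀ r : ℕ, (∑' ρ : List ℕ,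
        (((if r < G.Γ ∧ G.c r a ≠ 0 then ratio0 G a r else 0) : ℝ≥0) : ℝ≥0∞)
          * (Wc G q ρ : ℝ≥0∞))
        = (((if r < G.Γ ∧ G.c r a ≠ 0 then ratio0 G a r else 0) : ℝ≥0) : ℝ≥0∞)
          * ∑' ρ : List ℕ, (Wc G q ρ : ℝ≥0∞) := fun r => ENNReal.tsum_mul_left
    rw [tsum_congr hml, ENNReal.tsum_mul_right, sumWc G q]
    have hA : (∑' r : ℕ,
        (((if r < G.Γ ∧ G.c r a ≠ 0 then ratio0 G a r else 0) : ℝ≥0) : ℝ≥0∞))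
        = ((Ctot G a / Ctot G a : ℝ≥0) : ℝ≥0∞) := by
      rw [tsum_eq_sum (s := Finset.range G.Γ) ?_]
      · rw [← ENNReal.coe_finset_sum]
        congr 1
        have hcong : ∀ r ∈ Finset.range G.Γ,
            (if r < G.Γ ∧ G.c r a ≠ 0 then ratio0 G a r else 0) = ratio0 G a r := by
          intro r hr
          by_cases hc : G.c r a = 0
          · rw [if_neg (by simp [hc]), ratio0, hc, zero_div]
          · rw [if_pos ⟨Finset.mem_range.1 hr, hc⟩]
        rw [Finset.sum_congr rfl hcong]
        unfold ratio0 Ctot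
        rw [← Finset.sum_div]
      · intro r hr
        rw [if_neg fun hcon => hr (Finset.mem_range.2 hcon.1)]
        exact ENNReal.coe_zero
    rw [hA, List.map_cons, List.prod_cons]

lemma listprod_le_one : ∀ (l : List ℝ≥0∞), (∀ x ∈ l, x ≤ 1) → l.prod ≤ 1
  | [], _ => le_of_eq List.prod_nil
  | x :: l, h => by
    rw [List.prod_cons]
    exact mul_le_one' (h x (by simp)) (listprod_le_one l fun y hy => h y (by simp [hy]))

lemma sumWc_le_one (G : PEG V) (q : List (Edge V)) :
    (∑' ρ : List ℕ, (Wc G q ρ : ℝ≥0∞)) ≤ 1 := by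
  rw [sumWc]
  refine listprod_le_one _ ?_
  intro x hx
  obtain ⟨a, _, rfl⟩ := List.mem_map.1 hx
  refine ENNReal.coe_le_one_iff.2 ?_
  by_cases h : Ctot G a = 0
  · simp [h]
  · rw [div_self h]

lemma sumWc_eq_one (G : PEG V) {q : List (Edge V)} (hall : ∀ a ∈ q, Ctot G a ≠ 0) :
    (∑' ρ : List ℕ, (Wc G q ρ : ℝ≥0∞)) = 1 := by
  rw [sumWc]
  refine List.prod_eq_one ?_
  intro x hx
  obtain ⟨a, ha, rfl⟩ := List.mem_map.1 hx
  rw [div_self (hall a ha)]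
  exact ENNReal.coe_one

lemma FB_shift (G : PEG V) (F' : List (Edge V) → ℝ≥0) (δ : TPath V) :
    FB G F' (shiftPath G.Γ 1 δ) = FB G F' δ := by
  unfold FB
  rw [shiftPath_map_fst]
  congr 1
  unfold shiftPath
  rw [List.map_map]
  refine congrArg List.prod (List.map_congr_left ?_)
  intro x _
  show ratio0 G x.1 ((x.2 + 1 * G.Γ) % G.Γ) = ratio0 G x.1 (x.2 % G.Γ)
  rw [one_mul, Nat.add_mod_right]

lemma FB_mk0 (G : PEG V) (F' : List (Edge V) → ℝ≥0) {q : List (Edge V)} {ρ : List ℕ}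
    (h : ρ.length = q.length) (hlt : ∀ r ∈ ρ, r < G.Γ) :
    FB G F' (mk0 G.Γ q ρ)
      = K0 G * F' q * ((q.zip ρ).map fun z => ratio0 G z.1 z.2).prod := by
  unfold FB
  rw [map_ratio_eq, mk0_map_fst G.Γ h, mk0_map_mod G.Γ_pos h hlt]

lemma F'_zero_of_Ctot {G : PEG V} {F' : List (Edge V) → ℝ≥0} (hleg : IsLegalUnionFlow G F')
    {p : List (Edge V)} (hp : p ∈ UnionPaths G) {a : Edge V} (ha : a ∈ p)
    (hC : Ctot G a = 0) : F' p = 0 := by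
  have h1 : (F' p : ℝ≥0∞)
      ≤ ∑' q : {q : List (Edge V) // q ∈ UnionPaths G ∧ a ∈ q}, (F' q.1 : ℝ≥0∞) :=
    ENNReal.le_tsum (f := fun q : {q : List (Edge V) // q ∈ UnionPaths G ∧ a ∈ q} =>
      (F' q.1 : ℝ≥0∞)) ⟨p, ⟨hp, ha⟩⟩
  have h2 := hleg a (hp.1 a ha)
  rw [unionCap_eq, hC, ENNReal.coe_zero, mul_zero] at h2
  have := le_trans h1 h2
  simpa using this

end Statement4W


section Statement4DirB

variable {V : Type*}

/-- Index of the first occurrence of an edge in an edge list. -/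
def eIdx [DecidableEq V] (e : Edge V) : List (Edge V) → ℕ
  | [] => 0
  | a :: q => if a = e then 0 else eIdx e q + 1

lemma eIdx_lt [DecidableEq V] {e : Edge V} :
    ∀ {p : List (Edge V)}, e ∈ p → eIdx e p < p.length
  | [], h => by simp at h
  | a :: q, h => by
    by_cases hae : a = e
    · simp [eIdx, hae]
    · have : e ∈ q := by
        rcases List.mem_cons.1 h with rfl | h'
        · exact absurd rfl hae
        · exact h'
      have := eIdx_lt this
      simp only [eIdx, if_neg hae, List.length_cons]
      omega

lemma eIdx_get [DecidableEq V] {e : Edge V} :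
    ∀ {p : List (Edge V)} (h : e ∈ p), p.get ⟨eIdx e p, eIdx_lt h⟩ = e
  | [], h => by simp at h
  | a :: q, h => by
    by_cases hae : a = e
    · have h0 : eIdx e (a :: q) = 0 := by simp [eIdx, hae]
      have : (⟨eIdx e (a :: q), eIdx_lt h⟩ : Fin (a :: q).length)
          = ⟨0, by simp⟩ := Fin.ext h0
      rw [this]
      exact hae
    · have heq : e ∈ q := by
        rcases List.mem_cons.1 h with rfl | h'
        · exact absurd rfl hae
        · exact h'
      have h0 : eIdx e (a :: q) = eIdx e q + 1 := by simp [eIdx, hae]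
      have hfin : (⟨eIdx e (a :: q), eIdx_lt h⟩ : Fin (a :: q).length)
          = ⟨eIdx e q + 1, by have := eIdx_lt heq; simp; omega⟩ := Fin.ext h0
      rw [hfin]
      exact eIdx_get heq

lemma tpath_decomp [DecidableEq V] {G : PEG V} {δ : TPath V} {e : Edge V} {t : ℕ}
    (hP : δ ∈ PStar G) (hm : (e, t) ∈ δ) :
    ∃ hj : eIdx e (δ.map Prod.fst) < δ.length,
      δ.get ⟨eIdx e (δ.map Prod.fst), hj⟩ = (e, t) := by
  have htemp := PStar.temporal hP
  have hnd : (δ.map Prod.fst).Nodup := htemp.2.2.2.nodup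
  have hemem : e ∈ δ.map Prod.fst := List.mem_map.2 ⟨(e, t), hm, rfl⟩
  have hj' : eIdx e (δ.map Prod.fst) < (δ.map Prod.fst).length := eIdx_lt hemem
  have hj : eIdx e (δ.map Prod.fst) < δ.length := by simpa using hj'
  refine ⟨hj, ?_⟩
  have h1 : (δ.get ⟨eIdx e (δ.map Prod.fst), hj⟩).1 = e := by
    have h2 := eIdx_get hemem
    rw [List.get_eq_getElem, List.getElem_map] at h2
    exact h2
  exact List.inj_on_of_nodup_map hnd (List.get_mem δ _) hm (by rw [h1])

lemma tpath_split {δ : TPath V} {e : Edge V} {t : ℕ} {j : ℕ} (hj : j < δ.length)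
    (hget : δ.get ⟨j, hj⟩ = (e, t)) :
    δ.take j ++ (e, t) :: δ.drop (j + 1) = δ := by
  rw [← hget, List.get_eq_getElem, List.getElem_cons_drop, List.take_append_drop]

/-- The weight function for the capacity argument. -/
noncomputable def hB [DecidableEq V] (G : PEG V) (F' : List (Edge V) → ℝ≥0)
    (e : Edge V) (t : ℕ)
    (x : {p : List (Edge V) // p ∈ UnionPaths G ∧ e ∈ p} × (List ℕ × List ℕ)) : ℝ≥0∞ :=
  ((K0 G : ℝ≥0) : ℝ≥0∞) * (F' x.1.1 : ℝ≥0∞) * ((ratio0 G e (t % G.Γ) : ℝ≥0) : ℝ≥0∞)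
    * ((Wc G (x.1.1.take (eIdx e x.1.1)) x.2.1 : ℝ≥0∞)
      * (Wc G (x.1.1.drop (eIdx e x.1.1 + 1)) x.2.2 : ℝ≥0∞))

/-- The decomposition map for the capacity argument. -/
def ΦB [DecidableEq V] (G : PEG V) (e : Edge V) (t : ℕ)
    (δs : {δ : TPath V // δ ∈ PStar G ∧ (e, t) ∈ δ}) :
    {p : List (Edge V) // p ∈ UnionPaths G ∧ e ∈ p} × (List ℕ × List ℕ) :=
  (⟨δs.1.map Prod.fst, edges_mem_unionPaths (PStar.temporal δs.2.1),
      List.mem_map.2 ⟨(e, t), δs.2.2, rfl⟩⟩,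
    ((δs.1.take (eIdx e (δs.1.map Prod.fst))).map (fun x => x.2 % G.Γ),
     (δs.1.drop (eIdx e (δs.1.map Prod.fst) + 1)).map (fun x => x.2 % G.Γ)))

lemma ΦB_injective [DecidableEq V] (G : PEG V) (e : Edge V) (t : ℕ) :
    Function.Injective (ΦB G e t) := by
  rintro ⟨δ, hP, hm⟩ ⟨δ', hP', hm'⟩ heq
  apply Subtype.ext
  show δ = δ'
  unfold ΦB at heq
  simp only [Prod.mk.injEq, Subtype.mk.injEq] at heq
  obtain ⟨hfst, hres1, hres2⟩ := heq
  obtain ⟨hj, hget⟩ := tpath_decomp hP hm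
  obtain ⟨hj', hget'⟩ := tpath_decomp hP' hm'
  have hjj : eIdx e (δ'.map Prod.fst) = eIdx e (δ.map Prod.fst) := by rw [hfst]
  have hlen : δ.length = δ'.length := by
    have := congrArg List.length hfst
    simpa using this
  have hchain : List.Chain' (fun a b => a < b ∧ b ≤ a + G.Γ) (δ.map Prod.snd) :=
    (List.isChain_map _).2 (PStar.temporal hP).2.2.1
  have hchain' : List.Chain' (fun a b => a < b ∧ b ≤ a + G.Γ) (δ'.map Prod.snd) :=
    (List.isChain_map _).2 (PStar.temporal hP').2.2.1
  have hressplit : ∀ (σ : TPath V),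
      (σ.map Prod.snd).map (· % G.Γ) = σ.map (fun x => x.2 % G.Γ) := by
    intro σ
    rw [List.map_map]
    rfl
  have hresδ : δ.map (fun x => x.2 % G.Γ)
      = (δ.take (eIdx e (δ.map Prod.fst))).map (fun x => x.2 % G.Γ)
        ++ (t % G.Γ) :: (δ.drop (eIdx e (δ.map Prod.fst) + 1)).map (fun x => x.2 % G.Γ) := by
    conv_lhs => rw [← tpath_split hj hget]
    rw [List.map_append, List.map_cons]
  have hresδ' : δ'.map (fun x => x.2 % G.Γ)
      = (δ'.take (eIdx e (δ'.map Prod.fst))).map (fun x => x.2 % G.Γ)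
        ++ (t % G.Γ) :: (δ'.drop (eIdx e (δ'.map Prod.fst) + 1)).map (fun x => x.2 % G.Γ) := by
    conv_lhs => rw [← tpath_split hj' hget']
    rw [List.map_append, List.map_cons]
  have hres : δ.map (fun x => x.2 % G.Γ) = δ'.map (fun x => x.2 % G.Γ) :=
    hresδ.trans ((congrArg₂ (· ++ ·) hres1
      (congrArg (List.cons (t % G.Γ)) hres2)).trans hresδ'.symm)
  have hjlen : eIdx e (δ.map Prod.fst) < (δ.map Prod.snd).length := by simpa using hj
  have hjlen' : eIdx e (δ.map Prod.fst) < (δ'.map Prod.snd).length := by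
    simpa [hjj] using hj'
  have hanchor : (δ.map Prod.snd).get ⟨eIdx e (δ.map Prod.fst), hjlen⟩
      = (δ'.map Prod.snd).get ⟨eIdx e (δ.map Prod.fst), hjlen'⟩ := by
    rw [List.get_eq_getElem, List.get_eq_getElem, List.getElem_map, List.getElem_map]
    have h1 : (δ.get ⟨eIdx e (δ.map Prod.fst), hj⟩).2 = t := by rw [hget]
    have h2 : (δ'.get ⟨eIdx e (δ.map Prod.fst), by rw [← hjj]; exact hj'⟩).2 = t := by
      have h3 : (⟨eIdx e (δ.map Prod.fst), by rw [← hjj]; exact hj'⟩ : Fin δ'.length)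
          = ⟨eIdx e (δ'.map Prod.fst), hj'⟩ := by
        apply Fin.ext
        simp [hjj]
      rw [h3, hget']
    exact h1.trans h2.symm
  have htimes : δ.map Prod.snd = δ'.map Prod.snd := by
    refine eq_of_anchor G.Γ_pos (eIdx e (δ.map Prod.fst)) _ _ (by simpa using hlen)
      hchain hchain' ?_ hjlen hjlen' hanchor
    rw [hressplit δ, hressplit δ']
    exact hres
  exact list_eq_of_map_eq δ δ' hfst htimes

lemma FB_le_hB [DecidableEq V] (G : PEG V) (F' : List (Edge V) → ℝ≥0)
    (e : Edge V) (t : ℕ) (δs : {δ : TPath V // δ ∈ PStar G ∧ (e, t) ∈ δ}) :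
    (FB G F' δs.1 : ℝ≥0∞) ≤ hB G F' e t (ΦB G e t δs) := by
  obtain ⟨δ, hP, hm⟩ := δs
  by_cases hall : ∀ x ∈ δ, G.c (x.2 % G.Γ) x.1 ≠ 0
  · obtain ⟨hj, hget⟩ := tpath_decomp hP hm
    have hsplit := tpath_split hj hget
    refine le_of_eq ?_
    unfold hB ΦB FB
    simp only []
    have hprod : (δ.map fun x => ratio0 G x.1 (x.2 % G.Γ)).prod
        = ((δ.take (eIdx e (δ.map Prod.fst))).map fun x => ratio0 G x.1 (x.2 % G.Γ)).prod
          * ratio0 G e (t % G.Γ)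
          * ((δ.drop (eIdx e (δ.map Prod.fst) + 1)).map
              fun x => ratio0 G x.1 (x.2 % G.Γ)).prod := by
      conv_lhs => rw [← hsplit]
      rw [List.map_append, List.map_cons, List.prod_append, List.prod_cons]
      ring
    have hW1 : Wc G ((δ.map Prod.fst).take (eIdx e (δ.map Prod.fst)))
          ((δ.take (eIdx e (δ.map Prod.fst))).map (fun x => x.2 % G.Γ))
        = ((δ.take (eIdx e (δ.map Prod.fst))).map
            fun x => ratio0 G x.1 (x.2 % G.Γ)).prod := by
      rw [← List.map_take]
      exact Wc_tpath G _ (fun x hx => hall x (List.mem_of_mem_take hx))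
    have hW2 : Wc G ((δ.map Prod.fst).drop (eIdx e (δ.map Prod.fst) + 1))
          ((δ.drop (eIdx e (δ.map Prod.fst) + 1)).map (fun x => x.2 % G.Γ))
        = ((δ.drop (eIdx e (δ.map Prod.fst) + 1)).map
            fun x => ratio0 G x.1 (x.2 % G.Γ)).prod := by
      rw [← List.map_drop]
      exact Wc_tpath G _ (fun x hx => hall x (List.mem_of_mem_drop hx))
    rw [hW1, hW2, hprod]
    push_cast
    ring
  · push_neg at hall
    obtain ⟨x, hx, hcx⟩ := hall
    have hrz : ratio0 G x.1 (x.2 % G.Γ) = 0 := by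
      rw [ratio0, hcx, zero_div]
    have hpz : (δ.map fun y => ratio0 G y.1 (y.2 % G.Γ)).prod = 0 :=
      List.prod_eq_zero (List.mem_map.2 ⟨x, hx, hrz⟩)
    have hFB : FB G F' δ = 0 := by
      unfold FB
      rw [hpz, mul_zero]
    simp only [hFB]
    rw [ENNReal.coe_zero]
    exact zero_le

end Statement4DirB


section Statement4DirB2

variable {V : Type*}

lemma final_capB [DecidableEq V] (G : PEG V) (e : Edge V) (t : ℕ) :
    ((K0 G : ℝ≥0) : ℝ≥0∞) * ((ratio0 G e (t % G.Γ) : ℝ≥0) : ℝ≥0∞) * unionCap G e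
      ≤ (G.c t e : ℝ≥0∞) := by
  rw [unionCap_eq]
  by_cases hC : Ctot G e = 0
  · have hr : ratio0 G e (t % G.Γ) = 0 := by rw [ratio0, hC, div_zero]
    rw [hr]
    simp
  · have hC0 : (Ctot G e : ℝ≥0∞) ≠ 0 := ENNReal.coe_ne_zero.2 hC
    have hCt : (Ctot G e : ℝ≥0∞) ≠ ∞ := ENNReal.coe_ne_top
    have hrw : ((ratio0 G e (t % G.Γ) : ℝ≥0) : ℝ≥0∞)
        = (G.c (t % G.Γ) e : ℝ≥0∞) * ((Ctot G e : ℝ≥0∞))⁻¹ := by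
      rw [ratio0, ENNReal.coe_div hC, div_eq_mul_inv]
    rw [hrw]
    refine le_of_eq ?_
    calc ((K0 G : ℝ≥0) : ℝ≥0∞) * ((G.c (t % G.Γ) e : ℝ≥0∞) * ((Ctot G e : ℝ≥0∞))⁻¹)
          * (capFactor G * (Ctot G e : ℝ≥0∞))
        = (((K0 G : ℝ≥0) : ℝ≥0∞) * capFactor G)
          * ((G.c (t % G.Γ) e : ℝ≥0∞) * (((Ctot G e : ℝ≥0∞))⁻¹ * (Ctot G e : ℝ≥0∞))) := by
          ring
      _ = (G.c (t % G.Γ) e : ℝ≥0∞) := by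
          rw [K0_mul_capFactor, ENNReal.inv_mul_cancel hC0 hCt, one_mul, mul_one]
      _ = (G.c t e : ℝ≥0∞) := by rw [G.c_mod]

lemma mk0_foundationSD (G : PEG V) {p : List (Edge V)} {ρ : List ℕ} {s d : V}
    (hp : p ∈ UnionPaths G) (hend : EndpointsOf p s d)
    (hlen : ρ.length = p.length) (hres : ∀ r ∈ ρ, r < G.Γ)
    (hcz : ∀ z ∈ p.zip ρ, G.c z.2 z.1 ≠ 0) :
    mk0 G.Γ p ρ ∈ FoundationSD G s d := by
  have hpne : p ≠ [] := hp.2.1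
  have hne : mk0 G.Γ p ρ ≠ [] := mk0_ne_nil hpne hlen
  have hmfst : (mk0 G.Γ p ρ).map Prod.fst = p := mk0_map_fst G.Γ hlen
  refine ⟨⟨⟨hne, ?_, mk0_chain G.Γ_pos p ρ, ?_⟩, ?_⟩, ?_⟩
  · refine mk0_mem G p ρ ?_
    intro z hz
    have hz1 := List.of_mem_zip hz
    refine ⟨?_, hres z.2 hz1.2⟩
    by_contra hnot
    exact hcz z hz (G.c_zero _ _ hnot)
  · rw [hmfst]
    exact hp.2
  · intro t₀ ht₀
    rcases p with _ | ⟨a, q⟩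
    · exact absurd rfl hpne
    rcases ρ with _ | ⟨r, ρ'⟩
    · simp at hlen
    have hhd : (mk0 G.Γ (a :: q) (r :: ρ')).head? = some (a, r) := by simp [mk0]
    rw [hhd] at ht₀
    simp only [Option.map_some, Option.some.injEq] at ht₀
    exact ht₀ ▸ hres r List.mem_cons_self
  · show EndpointsOf ((mk0 G.Γ p ρ).map Prod.fst) s d
    rw [hmfst]
    exact hend

lemma directionB [Fintype V] [DecidableEq V] (G : PEG V) (m : V → V → ℝ≥0) {θ : ℝ≥0∞}
    (hθ : ∃ F' : List (Edge V) → ℝ≥0, IsLegalUnionFlow G F' ∧ AchievesThroughputU G F' m θ) :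
    ∃ F : TPath V → ℝ≥0, IsLegalTemporalFlow G F ∧ AchievesThroughputT G F m θ := by
  classical
  obtain ⟨F', hleg, hthr⟩ := hθ
  refine ⟨FB G F', ⟨fun δ _ => FB_shift G F' δ, ?_⟩, ?_⟩
  · -- capacity
    intro e t
    by_cases hU : e ∈ UnionEdges G
    · calc ∑' δs : {δ : TPath V // δ ∈ PStar G ∧ (e, t) ∈ δ}, ((FB G F' δs.1 : ℝ≥0) : ℝ≥0∞)
          ≤ ∑' δs : {δ : TPath V // δ ∈ PStar G ∧ (e, t) ∈ δ}, hB G F' e t (ΦB G e t δs) :=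
            ENNReal.tsum_le_tsum (FB_le_hB G F' e t)
        _ ≤ ∑' x : {p : List (Edge V) // p ∈ UnionPaths G ∧ e ∈ p} × (List ℕ × List ℕ),
              hB G F' e t x :=
            ENNReal.tsum_comp_le_tsum_of_injective (ΦB_injective G e t) _
        _ = ∑' ps : {p : List (Edge V) // p ∈ UnionPaths G ∧ e ∈ p},
              ∑' z : List ℕ × List ℕ, hB G F' e t (ps, z) := ENNReal.tsum_prod'
        _ ≤ ∑' ps : {p : List (Edge V) // p ∈ UnionPaths G ∧ e ∈ p},
              ((K0 G : ℝ≥0) : ℝ≥0∞) * (F' ps.1 : ℝ≥0∞)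
                * ((ratio0 G e (t % G.Γ) : ℝ≥0) : ℝ≥0∞) := by
            refine ENNReal.tsum_le_tsum fun ps => ?_
            set A := ((K0 G : ℝ≥0) : ℝ≥0∞) * (F' ps.1 : ℝ≥0∞)
              * ((ratio0 G e (t % G.Γ) : ℝ≥0) : ℝ≥0∞) with hA
            refine le_trans (le_of_eq ENNReal.tsum_prod') ?_
            have hstep : ∀ ρ₁ : List ℕ, (∑' ρ₂ : List ℕ, hB G F' e t (ps, (ρ₁, ρ₂)))
                = A * ((Wc G (ps.1.take (eIdx e ps.1)) ρ₁ : ℝ≥0∞)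
                  * ∑' ρ₂ : List ℕ, (Wc G (ps.1.drop (eIdx e ps.1 + 1)) ρ₂ : ℝ≥0∞)) := by
              intro ρ₁
              show (∑' ρ₂ : List ℕ, A * ((Wc G (ps.1.take (eIdx e ps.1)) ρ₁ : ℝ≥0∞)
                  * (Wc G (ps.1.drop (eIdx e ps.1 + 1)) ρ₂ : ℝ≥0∞))) = _
              rw [ENNReal.tsum_mul_left, ENNReal.tsum_mul_left]
            rw [tsum_congr hstep, ENNReal.tsum_mul_left, ENNReal.tsum_mul_right]
            calc A * ((∑' ρ₁ : List ℕ, (Wc G (ps.1.take (eIdx e ps.1)) ρ₁ : ℝ≥0∞))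
                  * ∑' ρ₂ : List ℕ, (Wc G (ps.1.drop (eIdx e ps.1 + 1)) ρ₂ : ℝ≥0∞))
                ≤ A * 1 :=
                  mul_le_mul_right (mul_le_one' (sumWc_le_one G _) (sumWc_le_one G _)) A
              _ = A := mul_one A
        _ = (((K0 G : ℝ≥0) : ℝ≥0∞) * ((ratio0 G e (t % G.Γ) : ℝ≥0) : ℝ≥0∞))
              * ∑' ps : {p : List (Edge V) // p ∈ UnionPaths G ∧ e ∈ p}, (F' ps.1 : ℝ≥0∞) := by
            rw [← ENNReal.tsum_mul_left]
            refine tsum_congr fun ps => ?_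
            ring
        _ ≤ (((K0 G : ℝ≥0) : ℝ≥0∞) * ((ratio0 G e (t % G.Γ) : ℝ≥0) : ℝ≥0∞)) * unionCap G e :=
            mul_le_mul_right (hleg e hU) _
        _ ≤ (G.c t e : ℝ≥0∞) := final_capB G e t
    · have hE : IsEmpty {δ : TPath V // δ ∈ PStar G ∧ (e, t) ∈ δ} := by
        refine ⟨?_⟩
        rintro ⟨δ, hP, hm⟩
        refine hU ?_
        have hEt := (PStar.temporal hP).2.1 (e, t) hm
        exact ⟨t % G.Γ, Nat.mod_lt _ G.Γ_pos, by rwa [G.E_mod]⟩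
      rw [tsum_empty]
      exact zero_le
  · -- throughput
    intro s d
    refine le_trans (hthr s d) ?_
    have hψinj : Function.Injective
        (fun x : Σ ps : {p : List (Edge V) // p ∈ UnionPaths G ∧ EndpointsOf p s d},
            {ρ : List ℕ // ρ.length = ps.1.length ∧ ∀ r ∈ ρ, r < G.Γ} =>
          mk0 G.Γ x.1.1 x.2.1) := by
      rintro ⟨⟨p, hp⟩, ⟨ρ, hρ1, hρ2⟩⟩ ⟨⟨p', hp'⟩, ⟨ρ', hρ1', hρ2'⟩⟩ h
      have h' : mk0 G.Γ p ρ = mk0 G.Γ p' ρ' := h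
      have h1 : ρ.length = p.length := hρ1
      have h2 : ρ'.length = p'.length := hρ1'
      obtain rfl : p = p' := by
        rw [← mk0_map_fst G.Γ h1, ← mk0_map_fst (V := V) G.Γ h2, h']
      obtain rfl : ρ = ρ' := by
        rw [← mk0_map_mod G.Γ_pos h1 hρ2, ← mk0_map_mod (V := V) G.Γ_pos h2 hρ2', h']
      rfl
    have hpoint : ∀ x : Σ ps : {p : List (Edge V) // p ∈ UnionPaths G ∧ EndpointsOf p s d},
        {ρ : List ℕ // ρ.length = ps.1.length ∧ ∀ r ∈ ρ, r < G.Γ},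
        ((K0 G : ℝ≥0) : ℝ≥0∞) * (F' x.1.1 : ℝ≥0∞) * (Wc G x.1.1 x.2.1 : ℝ≥0∞)
          ≤ (FoundationSD G s d).indicator
              (fun δ => ((FB G F' δ : ℝ≥0) : ℝ≥0∞)) (mk0 G.Γ x.1.1 x.2.1) := by
      rintro ⟨⟨p, hp, hend⟩, ⟨ρ, hρ1, hρ2⟩⟩
      by_cases hW : Wc G p ρ = 0
      · show ((K0 G : ℝ≥0) : ℝ≥0∞) * (F' p : ℝ≥0∞) * (Wc G p ρ : ℝ≥0∞) ≤ _
        rw [hW]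
        simp
      · have hcz : ∀ z ∈ p.zip ρ, G.c z.2 z.1 ≠ 0 := by
          by_contra hnot
          apply hW
          unfold Wc
          rw [if_neg (fun hcon => hnot hcon.2.2)]
        have hmem := mk0_foundationSD G hp hend hρ1 hρ2 hcz
        show ((K0 G : ℝ≥0) : ℝ≥0∞) * (F' p : ℝ≥0∞) * (Wc G p ρ : ℝ≥0∞)
          ≤ (FoundationSD G s d).indicator
              (fun δ => ((FB G F' δ : ℝ≥0) : ℝ≥0∞)) (mk0 G.Γ p ρ)
        rw [Set.indicator_of_mem hmem]
        refine le_of_eq ?_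
        have hWval : Wc G p ρ = ((p.zip ρ).map fun z => ratio0 G z.1 z.2).prod := by
          unfold Wc
          rw [if_pos ⟨hρ1, hρ2, hcz⟩]
        rw [FB_mk0 G F' hρ1 hρ2, hWval]
        push_cast
        ring
    have hcore : ((K0 G : ℝ≥0) : ℝ≥0∞)
        * (∑' ps : {p : List (Edge V) // p ∈ UnionPaths G ∧ EndpointsOf p s d},
            (F' ps.1 : ℝ≥0∞))
        ≤ ∑' δ : FoundationSD G s d, ((FB G F' δ.1 : ℝ≥0) : ℝ≥0∞) := by
      have hinner : ∀ ps : {p : List (Edge V) // p ∈ UnionPaths G ∧ EndpointsOf p s d},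
          ((K0 G : ℝ≥0) : ℝ≥0∞) * (F' ps.1 : ℝ≥0∞)
          = ∑' ρ : {ρ : List ℕ // ρ.length = ps.1.length ∧ ∀ r ∈ ρ, r < G.Γ},
              ((K0 G : ℝ≥0) : ℝ≥0∞) * (F' ps.1 : ℝ≥0∞) * (Wc G ps.1 ρ.1 : ℝ≥0∞) := by
        intro ps
        rw [ENNReal.tsum_mul_left]
        have hsupp : Function.support (fun ρ : List ℕ => (Wc G ps.1 ρ : ℝ≥0∞))
            ⊆ {ρ : List ℕ | ρ.length = ps.1.length ∧ ∀ r ∈ ρ, r < G.Γ} := by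
          intro ρ hρ
          rw [Function.mem_support] at hρ
          by_contra hnot
          apply hρ
          have hz : Wc G ps.1 ρ = 0 := by
            unfold Wc
            rw [if_neg (fun hcon => hnot ⟨hcon.1, hcon.2.1⟩)]
          rw [hz, ENNReal.coe_zero]
        have hsub : (∑' ρ : {ρ : List ℕ // ρ.length = ps.1.length ∧ ∀ r ∈ ρ, r < G.Γ},
            (Wc G ps.1 ρ.1 : ℝ≥0∞)) = ∑' ρ : List ℕ, (Wc G ps.1 ρ : ℝ≥0∞) :=
          tsum_subtype_eq_of_support_subset hsupp
        rw [hsub]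
        by_cases hex : ∀ a ∈ ps.1, Ctot G a ≠ 0
        · rw [sumWc_eq_one G hex, mul_one]
        · push_neg at hex
          obtain ⟨a, ha, hC⟩ := hex
          have hF0 : F' ps.1 = 0 := F'_zero_of_Ctot hleg ps.2.1 ha hC
          rw [hF0]
          simp
      calc ((K0 G : ℝ≥0) : ℝ≥0∞)
            * ∑' ps : {p : List (Edge V) // p ∈ UnionPaths G ∧ EndpointsOf p s d},
              (F' ps.1 : ℝ≥0∞)
          = ∑' ps : {p : List (Edge V) // p ∈ UnionPaths G ∧ EndpointsOf p s d},
              ((K0 G : ℝ≥0) : ℝ≥0∞) * (F' ps.1 : ℝ≥0∞) := (ENNReal.tsum_mul_left).symm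
        _ = ∑' ps : {p : List (Edge V) // p ∈ UnionPaths G ∧ EndpointsOf p s d},
              ∑' ρ : {ρ : List ℕ // ρ.length = ps.1.length ∧ ∀ r ∈ ρ, r < G.Γ},
              ((K0 G : ℝ≥0) : ℝ≥0∞) * (F' ps.1 : ℝ≥0∞) * (Wc G ps.1 ρ.1 : ℝ≥0∞) :=
            tsum_congr hinner
        _ = ∑' x : Σ ps : {p : List (Edge V) // p ∈ UnionPaths G ∧ EndpointsOf p s d},
              {ρ : List ℕ // ρ.length = ps.1.length ∧ ∀ r ∈ ρ, r < G.Γ},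
              ((K0 G : ℝ≥0) : ℝ≥0∞) * (F' x.1.1 : ℝ≥0∞) * (Wc G x.1.1 x.2.1 : ℝ≥0∞) :=
            (ENNReal.tsum_sigma'
              (fun x : Σ ps : {p : List (Edge V) // p ∈ UnionPaths G ∧ EndpointsOf p s d},
                {ρ : List ℕ // ρ.length = ps.1.length ∧ ∀ r ∈ ρ, r < G.Γ} =>
                ((K0 G : ℝ≥0) : ℝ≥0∞) * (F' x.1.1 : ℝ≥0∞)
                  * (Wc G x.1.1 x.2.1 : ℝ≥0∞))).symm
        _ ≤ ∑' x : Σ ps : {p : List (Edge V) // p ∈ UnionPaths G ∧ EndpointsOf p s d},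
              {ρ : List ℕ // ρ.length = ps.1.length ∧ ∀ r ∈ ρ, r < G.Γ},
              (FoundationSD G s d).indicator
                (fun δ => ((FB G F' δ : ℝ≥0) : ℝ≥0∞)) (mk0 G.Γ x.1.1 x.2.1) :=
            ENNReal.tsum_le_tsum hpoint
        _ ≤ ∑' δ : TPath V, (FoundationSD G s d).indicator
              (fun δ => ((FB G F' δ : ℝ≥0) : ℝ≥0∞)) δ :=
            ENNReal.tsum_comp_le_tsum_of_injective hψinj _
        _ = ∑' δ : FoundationSD G s d, ((FB G F' δ.1 : ℝ≥0) : ℝ≥0∞) :=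
            (tsum_subtype (FoundationSD G s d) (fun δ => ((FB G F' δ : ℝ≥0) : ℝ≥0∞))).symm
    calc ∑' ps : {p : List (Edge V) // p ∈ UnionPaths G ∧ EndpointsOf p s d},
          (F' ps.1 : ℝ≥0∞)
        = (capFactor G * ((K0 G : ℝ≥0) : ℝ≥0∞))
            * ∑' ps : {p : List (Edge V) // p ∈ UnionPaths G ∧ EndpointsOf p s d},
              (F' ps.1 : ℝ≥0∞) := by
          rw [mul_comm (capFactor G), K0_mul_capFactor, one_mul]
      _ = capFactor G * (((K0 G : ℝ≥0) : ℝ≥0∞)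
            * ∑' ps : {p : List (Edge V) // p ∈ UnionPaths G ∧ EndpointsOf p s d},
              (F' ps.1 : ℝ≥0∞)) := mul_assoc _ _ _
      _ ≤ capFactor G * ∑' δ : FoundationSD G s d, ((FB G F' δ.1 : ℝ≥0) : ℝ≥0∞) :=
          mul_le_mul_right hcore _

end Statement4DirB2

/-- Corollary: reduction to a simple graph.
The maximum throughput over all legal temporal flows in the periodic evolving graph
equals the maximum throughput over all legal flows in the simple static weighted
union graph `G' = (V, ⋃_{t<Γ} ℰ_t)` with capacities `ĉ(e) = ((1−Δu)/Γ)·Σ_{t<Γ} c_t(e)`. -/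
theorem statement4 {V : Type*} [Fintype V] [DecidableEq V] (G : PEG V)
    (m : V → V → ℝ≥0) :
    sSup {θ : ℝ≥0∞ | ∃ F : TPath V → ℝ≥0,
        IsLegalTemporalFlow G F ∧ AchievesThroughputT G F m θ} =
      sSup {θ : ℝ≥0∞ | ∃ F : List (Edge V) → ℝ≥0,
        IsLegalUnionFlow G F ∧ AchievesThroughputU G F m θ} := by
  apply le_antisymm
  · refine sSup_le_sSup ?_
    rintro θ ⟨F, hleg, hthr⟩
    exact directionA G m ⟨F, hleg, hthr⟩
  · refine sSup_le_sSup ?_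
    rintro θ ⟨F', hleg, hthr⟩
    exact directionB G m ⟨F', hleg, hthr⟩

end RDCN
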